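/- Under the B-spline copula hypotheses, C is 2-increasing: for all 0 ≤ x₁ ≤ x₂ ≤ 1 and 0 ≤ y₁ ≤ y₂ ≤ 1, C(x₂, y₂; R) − C(x₁, y₂; R) − C(x₂, y₁; R) + C(x₁, y₁; R) ≥ 0. -/
import Mathlib


open MeasureTheory intervalIntegral

/-- The B-spline copula `C(x,y;R) = ∑ₖ ∑ₗ r k ℓ * Φ k x * Ψ ℓ y`,
where `Φ k x = ∫_0^x φ k` and `Ψ ℓ y = ∫_0^y ψ ℓ`. -/
noncomputable def bsplineCopula (m n : ℕ) (φ : Fin m → ℝ → ℝ) (ψ : Fin n → ℝ → ℝ)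
    (r : Fin m → Fin n → ℝ) (x y : ℝ) : ℝ :=
  ∑ k, ∑ ℓ, r k ℓ * (∫ u in (0:ℝ)..x, φ k u) * (∫ v in (0:ℝ)..y, ψ ℓ v)

lemma aux_diff_nonneg (f : ℝ → ℝ) (hint : IntervalIntegrable f volume 0 1)
    (hnn : ∀ u ∈ Set.Icc (0:ℝ) 1, 0 ≤ f u) (a b : ℝ) (h0 : 0 ≤ a) (hab : a ≤ b)
    (h1 : b ≤ 1) : 0 ≤ (∫ u in (0:ℝ)..b, f u) - ∫ u in (0:ℝ)..a, f u := by
  have hIa : IntervalIntegrable f volume 0 a := by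
    apply hint.mono_set
    rw [Set.uIcc_of_le h0, Set.uIcc_of_le (by linarith : (0:ℝ) ≤ 1)]
    exact Set.Icc_subset_Icc le_rfl (by linarith)
  have hIab : IntervalIntegrable f volume a b := by
    apply hint.mono_set
    rw [Set.uIcc_of_le hab, Set.uIcc_of_le (by linarith : (0:ℝ) ≤ 1)]
    exact Set.Icc_subset_Icc h0 h1
  have hadd := intervalIntegral.integral_add_adjacent_intervals hIa hIab
  have hnn2 : 0 ≤ ∫ u in a..b, f u :=
    intervalIntegral.integral_nonneg hab (fun u hu => hnn u ⟨le_trans h0 hu.1, le_trans hu.2 h1⟩)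
  linarith

/-- Under the B-spline copula hypotheses, `C` is 2-increasing. -/
theorem bsplineCopula_two_increasing (m n : ℕ) (hm : 0 < m) (hn : 0 < n)
    (φ : Fin m → ℝ → ℝ) (ψ : Fin n → ℝ → ℝ)
    (q : Fin m → ℝ) (qs : Fin n → ℝ) (r : Fin m → Fin n → ℝ)
    (hφ_nonneg : ∀ k, ∀ u ∈ Set.Icc (0:ℝ) 1, 0 ≤ φ k u)
    (hφ_int : ∀ k, IntervalIntegrable (φ k) volume 0 1)
    (hφ_total : ∀ k, ∫ u in (0:ℝ)..1, φ k u = 1)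
    (hq : ∀ k, 0 < q k)
    (hφ_part : ∀ u ∈ Set.Icc (0:ℝ) 1, ∑ k, q k * φ k u = 1)
    (hψ_nonneg : ∀ ℓ, ∀ v ∈ Set.Icc (0:ℝ) 1, 0 ≤ ψ ℓ v)
    (hψ_int : ∀ ℓ, IntervalIntegrable (ψ ℓ) volume 0 1)
    (hψ_total : ∀ ℓ, ∫ v in (0:ℝ)..1, ψ ℓ v = 1)
    (hqs : ∀ ℓ, 0 < qs ℓ)
    (hψ_part : ∀ v ∈ Set.Icc (0:ℝ) 1, ∑ ℓ, qs ℓ * ψ ℓ v = 1)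
    (hr_nonneg : ∀ k ℓ, 0 ≤ r k ℓ)
    (hr_row : ∀ k, ∑ ℓ, r k ℓ = q k)
    (hr_col : ∀ ℓ, ∑ k, r k ℓ = qs ℓ) :
    ∀ x₁ x₂ y₁ y₂ : ℝ, 0 ≤ x₁ → x₁ ≤ x₂ → x₂ ≤ 1 → 0 ≤ y₁ → y₁ ≤ y₂ → y₂ ≤ 1 →
      0 ≤ bsplineCopula m n φ ψ r x₂ y₂ - bsplineCopula m n φ ψ r x₁ y₂
          - bsplineCopula m n φ ψ r x₂ y₁ + bsplineCopula m n φ ψ r x₁ y₁ := by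
  intro x₁ x₂ y₁ y₂ hx0 hx12 hx1 hy0 hy12 hy1
  have key : bsplineCopula m n φ ψ r x₂ y₂ - bsplineCopula m n φ ψ r x₁ y₂
      - bsplineCopula m n φ ψ r x₂ y₁ + bsplineCopula m n φ ψ r x₁ y₁
      = ∑ k, ∑ ℓ, r k ℓ * ((∫ u in (0:ℝ)..x₂, φ k u) - ∫ u in (0:ℝ)..x₁, φ k u)
          * ((∫ v in (0:ℝ)..y₂, ψ ℓ v) - ∫ v in (0:ℝ)..y₁, ψ ℓ v) := by
    simp only [bsplineCopula, ← Finset.sum_sub_distrib, ← Finset.sum_add_distrib]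
    apply Finset.sum_congr rfl; intro k _
    apply Finset.sum_congr rfl; intro ℓ _
    ring
  rw [key]
  apply Finset.sum_nonneg; intro k _
  apply Finset.sum_nonneg; intro ℓ _
  exact mul_nonneg (mul_nonneg (hr_nonneg k ℓ)
    (aux_diff_nonneg (φ k) (hφ_int k) (hφ_nonneg k) x₁ x₂ hx0 hx12 hx1))
    (aux_diff_nonneg (ψ ℓ) (hψ_int ℓ) (hψ_nonneg ℓ) y₁ y₂ hy0 hy12 hy1)
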